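/- Let F : X → ℝ be convex differentiable with L-Lipschitz gradient, G proper convex lsc, τ ∈ (0, 1/L), J := F + G. For any z ∈ X and x⁺ := prox_{τG}(z − τ∇F(z)), and any x* ∈ X: J(x⁺) − J(x*) + (1/(2τ))‖x⁺ − x*‖² + ((1 − τL)/(2τ))‖x⁺ − z‖² ≤ (1/(2τ))‖z − x*‖². -/

import Mathlib

open RealInnerProductSpace

/-- `G` is proper, convex and lower semicontinuous as an extended-real-valued function. -/
def ProperConvexLsc {X : Type*} [NormedAddCommGroup X] [InnerProductSpace ℝ X]
    (G : X → EReal) : Prop :=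
  (∃ x, G x ≠ ⊤) ∧ (∀ x, G x ≠ ⊥) ∧
  (∀ x y : X, ∀ a b : ℝ, 0 ≤ a → 0 ≤ b → a + b = 1 →
    G (a • x + b • y) ≤ (a : EReal) * G x + (b : EReal) * G y) ∧
  LowerSemicontinuous G

/-- `p` is the proximal point `prox_{τG}(x)`. -/
def IsProx {X : Type*} [NormedAddCommGroup X] [InnerProductSpace ℝ X]
    (τ : ℝ) (G : X → EReal) (x p : X) : Prop :=
  ∀ z : X, G p + ((‖p - x‖ ^ 2 / (2 * τ) : ℝ) : EReal)
    ≤ G z + ((‖z - x‖ ^ 2 / (2 * τ) : ℝ) : EReal)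

theorem aux_grad_ineq {X : Type*} [NormedAddCommGroup X] [InnerProductSpace ℝ X] [CompleteSpace X]
    (F : X → ℝ) (hFconv : ConvexOn ℝ Set.univ F) (g z x : X)
    (hg : HasGradientAt F g z) : ⟪g, x - z⟫ ≤ F x - F z := by
  set v := x - z with hv
  have hderiv : HasDerivAt (fun t : ℝ => F (z + t • v)) ⟪g, v⟫ 0 := by
    have h1 : HasDerivAt (fun t : ℝ => z + t • v) v 0 := by
      simpa using ((hasDerivAt_id (0:ℝ)).smul_const v).const_add z
    have h2 := (by simpa using hg : HasGradientAt F g (z + (0:ℝ) • v)).hasFDerivAt.comp_hasDerivAt 0 h1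
    simpa [InnerProductSpace.toDual_apply_apply, real_inner_comm, Function.comp_def] using h2
  have hslope : Filter.Tendsto (slope (fun t : ℝ => F (z + t • v)) 0)
      (nhdsWithin 0 (Set.Ioi 0)) (nhds ⟪g, v⟫) := by
    have := (hderiv.hasDerivWithinAt (s := Set.Ioi 0))
    rw [hasDerivWithinAt_iff_tendsto_slope] at this
    simpa [Set.diff_singleton_eq_self (by simp : (0:ℝ) ∉ Set.Ioi 0)] using this
  have hbound : ∀ᶠ t in nhdsWithin (0:ℝ) (Set.Ioi 0),
      slope (fun t : ℝ => F (z + t • v)) 0 t ≤ F x - F z := by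
    filter_upwards [Ioo_mem_nhdsGT_of_mem (by simp : (0:ℝ) ∈ Set.Ico 0 1)] with t ht
    have h01 : (0:ℝ) < t := ht.1
    have hconv := hFconv.2 (Set.mem_univ x) (Set.mem_univ z) (le_of_lt h01)
      (by linarith [ht.2] : (0:ℝ) ≤ 1 - t) (by ring)
    have hx : t • x + (1 - t) • z = z + t • v := by
      simp only [hv, smul_sub]; module
    rw [hx] at hconv
    rw [slope_def_field]
    simp only [smul_eq_mul] at hconv
    have h3 : F (z + t • v) - F z ≤ t * (F x - F z) := by nlinarith
    simp only [zero_smul, add_zero, sub_zero]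
    rw [div_le_iff₀ h01]
    linarith [h3]
  exact le_of_tendsto hslope hbound

theorem aux_descent_lemma {X : Type*} [NormedAddCommGroup X] [InnerProductSpace ℝ X] [CompleteSpace X]
    (F : X → ℝ) (f : X → X) (L : ℝ)
    (hgradF : ∀ y, HasGradientAt F (f y) y)
    (hlipF : ∀ y y', ‖f y - f y'‖ ≤ L * ‖y - y'‖) (z x : X) :
    F x ≤ F z + ⟪f z, x - z⟫ + L / 2 * ‖x - z‖ ^ 2 := by
  set v := x - z with hv
  have hfc : Continuous f := by
    have : LipschitzWith (Real.toNNReal L) f := by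
      apply LipschitzWith.of_dist_le_mul
      intro a b
      rw [dist_eq_norm, dist_eq_norm]
      exact (hlipF a b).trans
        (mul_le_mul_of_nonneg_right (Real.le_coe_toNNReal L) (norm_nonneg _))
    exact this.continuous
  have hderiv : ∀ t : ℝ, HasDerivAt (fun t : ℝ => F (z + t • v)) ⟪f (z + t • v), v⟫ t := by
    intro t
    have h1 : HasDerivAt (fun t : ℝ => z + t • v) v t := by
      simpa using ((hasDerivAt_id t).smul_const v).const_add z
    have h2 := (hgradF (z + t • v)).hasFDerivAt.comp_hasDerivAt t h1
    simpa [InnerProductSpace.toDual_apply_apply, real_inner_comm, Function.comp_def] using h2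
  have hcont : Continuous (fun t : ℝ => ⟪f (z + t • v), v⟫) := by
    apply Continuous.inner (hfc.comp (by continuity)) continuous_const
  have hint : ∫ t in (0:ℝ)..1, ⟪f (z + t • v), v⟫ = F (z + (1:ℝ) • v) - F (z + (0:ℝ) • v) :=
    intervalIntegral.integral_eq_sub_of_hasDerivAt (fun t _ => hderiv t)
      (hcont.intervalIntegrable 0 1)
  have hFx : F x - F z = ∫ t in (0:ℝ)..1, ⟪f (z + t • v), v⟫ := by
    rw [hint]; simp [hv]
  have hbound : ∫ t in (0:ℝ)..1, ⟪f (z + t • v), v⟫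
      ≤ ∫ t in (0:ℝ)..1, (⟪f z, v⟫ + t * L * ‖v‖ ^ 2) := by
    apply intervalIntegral.integral_mono_on (by norm_num) (hcont.intervalIntegrable 0 1)
      ((by continuity : Continuous fun t : ℝ => ⟪f z, v⟫ + t * L * ‖v‖ ^ 2).intervalIntegrable 0 1)
    intro t ht
    have h1 : ⟪f (z + t • v) - f z, v⟫ ≤ ‖f (z + t • v) - f z‖ * ‖v‖ :=
      real_inner_le_norm _ _
    have h2 : ‖f (z + t • v) - f z‖ ≤ L * (t * ‖v‖) := by
      have := hlipF (z + t • v) z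
      simpa [norm_smul, abs_of_nonneg ht.1] using this
    have h3 : ‖f (z + t • v) - f z‖ * ‖v‖ ≤ L * (t * ‖v‖) * ‖v‖ :=
      mul_le_mul_of_nonneg_right h2 (norm_nonneg _)
    have h4 : ⟪f (z + t • v), v⟫ = ⟪f z, v⟫ + ⟪f (z + t • v) - f z, v⟫ := by
      rw [inner_sub_left]; ring
    rw [h4]; nlinarith [h1, h3]
  have hval : ∫ t in (0:ℝ)..1, (⟪f z, v⟫ + t * L * ‖v‖ ^ 2) = ⟪f z, v⟫ + L / 2 * ‖v‖ ^ 2 := by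
    have heq : (fun t : ℝ => ⟪f z, v⟫ + t * L * ‖v‖ ^ 2)
        = fun t : ℝ => ⟪f z, v⟫ + t * (L * ‖v‖ ^ 2) := by funext t; ring
    rw [heq, intervalIntegral.integral_add intervalIntegrable_const
      ((by continuity : Continuous fun t : ℝ => t * (L * ‖v‖ ^ 2)).intervalIntegrable 0 1),
      intervalIntegral.integral_const, intervalIntegral.integral_mul_const,
      integral_id]
    simp; ring
  have : F x - F z ≤ ⟪f z, v⟫ + L / 2 * ‖v‖ ^ 2 := by
    rw [hFx]; rw [hval] at hbound; exact hbound
  linarith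

theorem forward_backward_three_point_estimate
    {X : Type*} [NormedAddCommGroup X] [InnerProductSpace ℝ X] [CompleteSpace X]
    (F : X → ℝ) (f : X → X) (L τ : ℝ)
    (hFconv : ConvexOn ℝ Set.univ F)
    (hgradF : ∀ y, HasGradientAt F (f y) y)
    (hlipF : ∀ y y', ‖f y - f y'‖ ≤ L * ‖y - y'‖)
    (G : X → EReal) (hG : ProperConvexLsc G)
    (hτ : 0 < τ) (hτL : τ < 1 / L)
    (z xplus xstar : X)
    (hprox : IsProx τ G (z - τ • f z) xplus) :
    G xplus + ((F xplus + 1 / (2 * τ) * ‖xplus - xstar‖ ^ 2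
        + (1 - τ * L) / (2 * τ) * ‖xplus - z‖ ^ 2 : ℝ) : EReal)
      ≤ G xstar + ((F xstar + 1 / (2 * τ) * ‖z - xstar‖ ^ 2 : ℝ) : EReal) := by
  obtain ⟨⟨x₀, hx₀⟩, hbot, hconvG, _⟩ := hG
  set y := z - τ • f z with hy
  have h2τ : (0:ℝ) < 2 * τ := by linarith
  -- G xplus is not ⊤
  have hxpne : G xplus ≠ ⊤ := by
    intro htop
    have h := hprox x₀
    rw [htop, EReal.top_add_coe, top_le_iff,
      ← EReal.coe_toReal hx₀ (hbot x₀), ← EReal.coe_add] at h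
    exact EReal.coe_ne_top _ h
  -- dispose of the case G xstar = ⊤
  by_cases hstop : G xstar = ⊤
  · rw [hstop, EReal.top_add_coe]; exact le_top
  set gp := (G xplus).toReal with hgp'
  set gs := (G xstar).toReal with hgs'
  have hgp : G xplus = (gp : EReal) := (EReal.coe_toReal hxpne (hbot xplus)).symm
  have hgs : G xstar = (gs : EReal) := (EReal.coe_toReal hstop (hbot xstar)).symm
  set c : ℝ := ⟪xplus - y, xstar - xplus⟫ with hc
  set d : ℝ := ‖xstar - xplus‖ ^ 2 with hd
  -- key prox inequality
  have hA : 2 * τ * (gp - gs) ≤ 2 * c := by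
    have hstep : ∀ t : ℝ, t ∈ Set.Ioc (0:ℝ) 1 → 2 * τ * (gp - gs) ≤ 2 * c + t * d := by
      intro t ht
      obtain ⟨ht0, ht1⟩ := ht
      set wt := (1 - t) • xplus + t • xstar with hwt
      have hcv : G wt ≤ (((1 - t) * gp + t * gs : ℝ) : EReal) := by
        have := hconvG xplus xstar (1 - t) t (by linarith) (le_of_lt ht0) (by ring)
        rw [hgp, hgs, ← EReal.coe_mul, ← EReal.coe_mul, ← EReal.coe_add] at this
        exact this
      have h := (hprox wt).trans (add_le_add_left hcv _)
      rw [hgp, ← EReal.coe_add, ← EReal.coe_add, EReal.coe_le_coe_iff] at h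
      have hexp : ‖wt - y‖ ^ 2 = ‖xplus - y‖ ^ 2 + 2 * t * c + t ^ 2 * d := by
        have hwty : wt - y = (xplus - y) + t • (xstar - xplus) := by
          rw [hwt]; module
        rw [hwty, norm_add_sq_real, real_inner_smul_right, norm_smul]
        simp [abs_of_pos ht0, hc, hd]
        ring
      rw [hexp] at h
      -- h : gp + ‖xplus - y‖²/(2τ) ≤ (1-t)gp + t gs + (‖xplus-y‖² + 2tc + t²d)/(2τ)
      have h5 : t * (gp - gs) ≤ (2 * t * c + t ^ 2 * d) / (2 * τ) := by
        have e1 : (‖xplus - y‖ ^ 2 + 2 * t * c + t ^ 2 * d) / (2 * τ)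
            = ‖xplus - y‖ ^ 2 / (2 * τ) + (2 * t * c + t ^ 2 * d) / (2 * τ) := by
          ring
        rw [e1] at h
        linarith
      have h6 := mul_le_mul_of_nonneg_left h5 (le_of_lt h2τ)
      rw [mul_div_cancel₀ _ (ne_of_gt h2τ)] at h6
      -- h6 : 2τ * (t * (gp - gs)) ≤ 2tc + t²d
      rw [← mul_le_mul_iff_right₀ ht0]
      nlinarith [h6]
    have hd0 : 0 ≤ d := by rw [hd]; positivity
    refine le_of_forall_pos_le_add fun ε hε => ?_
    set t := min 1 (ε / (d + 1)) with htdef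
    have ht0 : 0 < t := lt_min one_pos (div_pos hε (by linarith))
    have htd : t * d ≤ ε := by
      calc t * d ≤ ε / (d + 1) * d := mul_le_mul_of_nonneg_right (min_le_right _ _) hd0
        _ ≤ ε := by rw [div_mul_eq_mul_div, div_le_iff₀ (by linarith)]; nlinarith
    linarith [hstep t ⟨ht0, min_le_left _ _⟩]
  -- descent lemma and convexity
  have hB := aux_descent_lemma F f L hgradF hlipF z xplus
  have hC := aux_grad_ineq F hFconv (f z) z xstar (hgradF z)
  -- inner product identities
  have hI0 : c = ⟪xplus - z, xstar - xplus⟫ + τ * ⟪f z, xstar - xplus⟫ := by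
    rw [hc, hy, show xplus - (z - τ • f z) = (xplus - z) + τ • f z by module,
      inner_add_left, real_inner_smul_left]
  have hI1 : ⟪f z, xstar - xplus⟫ + ⟪f z, xplus - z⟫ = ⟪f z, xstar - z⟫ := by
    rw [← inner_add_right]; congr 1; module
  have hI2 : 2 * ⟪xplus - z, xstar - xplus⟫
      = ‖z - xstar‖ ^ 2 - ‖xplus - z‖ ^ 2 - ‖xplus - xstar‖ ^ 2 := by
    have h := norm_add_sq_real (z - xplus) (xplus - xstar)
    rw [show (z - xplus) + (xplus - xstar) = z - xstar by module] at h
    have e1 : ⟪z - xplus, xplus - xstar⟫ = ⟪xplus - z, xstar - xplus⟫ := by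
      rw [← neg_sub xplus z, ← neg_sub xstar xplus, inner_neg_neg]
    have e2 : ‖z - xplus‖ = ‖xplus - z‖ := norm_sub_rev _ _
    have e3 : ‖xplus - xstar‖ = ‖xplus - xstar‖ := rfl
    rw [e1, e2] at h
    linarith
  -- final real inequality
  have key : gp + (F xplus + 1 / (2 * τ) * ‖xplus - xstar‖ ^ 2
      + (1 - τ * L) / (2 * τ) * ‖xplus - z‖ ^ 2)
      ≤ gs + (F xstar + 1 / (2 * τ) * ‖z - xstar‖ ^ 2) := by
    rw [← sub_nonneg]
    have heq : gs + (F xstar + 1 / (2 * τ) * ‖z - xstar‖ ^ 2)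
        - (gp + (F xplus + 1 / (2 * τ) * ‖xplus - xstar‖ ^ 2
          + (1 - τ * L) / (2 * τ) * ‖xplus - z‖ ^ 2))
        = (2 * τ * (gs - gp) + 2 * τ * (F xstar - F xplus) + ‖z - xstar‖ ^ 2
          - ‖xplus - xstar‖ ^ 2 - (1 - τ * L) * ‖xplus - z‖ ^ 2) / (2 * τ) := by
      field_simp
      ring
    rw [heq]
    apply div_nonneg _ (le_of_lt h2τ)
    have hB2 := mul_le_mul_of_nonneg_left hB (le_of_lt h2τ)
    have hC2 := mul_le_mul_of_nonneg_left hC (le_of_lt h2τ)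
    nlinarith [hA, hB2, hC2, hI0, hI1, hI2]
  rw [hgp, hgs, ← EReal.coe_add, ← EReal.coe_add, EReal.coe_le_coe_iff]
  exact key
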